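/- Let (a_k)_{k ≥ 1} be a nonnegative sequence, (λ_k)_{k ≥ 1} a nonnegative sequence, and C ≥ 0, and suppose that for every k ≥ 1: λ_k² ≤ C + 2 ∑_{i=1}^{k-1} a_i λ_i + ∑_{i=1}^{k-1} a_i², where ∑_{i=1}^{∞} a_i < ∞. Then the sequence (λ_k) is bounded; in fact λ_k ≤ max{1, C + 2∑_{i=1}^{∞} a_i + ∑_{i=1}^{∞} a_i²} for all k. -/

import Mathlib

/-- Boundedness of a sequence satisfying a recursive quadratic bound with
summable coefficients. -/
theorem recursive_quadratic_bounded
    (a lam : ℕ → ℝ) (C : ℝ) (hC : 0 ≤ C)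
    (ha : ∀ i, 0 ≤ a i) (hlam : ∀ i, 0 ≤ lam i)
    (hsum : Summable a)
    (hrec : ∀ k, lam k ^ 2
      ≤ C + 2 * ∑ i ∈ Finset.range k, a i * lam i + ∑ i ∈ Finset.range k, a i ^ 2) :
    ∀ k, lam k ≤ max 1 (C + 2 * ∑' i, a i + ∑' i, a i ^ 2) := by
  have hsq : Summable (fun i => a i ^ 2) := by
    refine Summable.of_norm_bounded_eventually_nat hsum ?_
    have h0 := hsum.tendsto_atTop_zero
    filter_upwards [h0.eventually (gt_mem_nhds (by norm_num : (0:ℝ) < 1))] with i hi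
    have : |a i| ≤ 1 := by rw [abs_of_nonneg (ha i)]; linarith
    calc ‖a i ^ 2‖ = |a i| * |a i| := by rw [Real.norm_eq_abs, abs_pow, sq]
    _ ≤ 1 * |a i| := by nlinarith [abs_nonneg (a i)]
    _ = a i := by rw [one_mul, abs_of_nonneg (ha i)]
  set S := ∑' i, a i with hSdef
  set T := ∑' i, a i ^ 2 with hTdef
  have hS0 : 0 ≤ S := tsum_nonneg ha
  have hT0 : 0 ≤ T := tsum_nonneg (fun i => sq_nonneg _)
  intro k
  obtain ⟨j, hjmem, hjmax⟩ := Finset.exists_max_image (Finset.range (k+1)) lam ⟨k, by simp⟩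
  have hk : lam k ≤ lam j := hjmax k (by simp)
  by_cases h1 : lam j ≤ 1
  · exact hk.trans (h1.trans (le_max_left _ _))
  · push_neg at h1
    have hjk : j < k + 1 := Finset.mem_range.mp hjmem
    have hb1 : ∑ i ∈ Finset.range j, a i * lam i ≤ lam j * ∑ i ∈ Finset.range j, a i := by
      rw [Finset.mul_sum]
      refine Finset.sum_le_sum fun i hi => ?_
      have hij : lam i ≤ lam j := hjmax i (Finset.mem_range.mpr (by
        have := Finset.mem_range.mp hi; omega))
      calc a i * lam i ≤ a i * lam j := by nlinarith [ha i]
      _ = lam j * a i := mul_comm _ _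
    have hb2 : ∑ i ∈ Finset.range j, a i ≤ S := hsum.sum_le_tsum _ (fun i _ => ha i)
    have hb3 : ∑ i ∈ Finset.range j, a i ^ 2 ≤ T := hsq.sum_le_tsum _ (fun i _ => sq_nonneg _)
    have hb : lam j ^ 2 ≤ C + 2 * (lam j * S) + T := by
      have := hrec j
      nlinarith [this]
    have hfin : lam j ≤ C + 2 * S + T := by nlinarith
    exact hk.trans (hfin.trans (le_max_right _ _))
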